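/- Let n ≥ 2 be an integer. Let (R_1,Z_1),…,(R_n,Z_n) be i.i.d. copies of a pair (R,Z) of square-integrable real random variables satisfying Cov(R_k, Z_j) = 0 for all j,k and Cov(R_k R_{k'}, Z_j Z_{j'}) = 0 for all j,j',k,k'. Suppose R takes values in {−1, 1} with P(R = 1) = p, and write σ_Z² = Var(Z). Define the RLOO estimator G = (1/n) Σ_{j=1}^n (R_j − (1/(n−1)) Σ_{k≠j} R_k) Z_j. Then Var(G) = (1/(n−1)) · 4 σ_Z² p (1−p). -/

import Mathlib

open MeasureTheory ProbabilityTheory Finset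

/-- Covariance of two real random variables. -/
noncomputable def covar {Ω : Type*} [MeasurableSpace Ω] (μ : Measure Ω) (X Y : Ω → ℝ) : ℝ :=
  (∫ ω, X ω * Y ω ∂μ) - (∫ ω, X ω ∂μ) * (∫ ω, Y ω ∂μ)

lemma sum_coef {n : ℕ} (c : ℝ) (j : Fin n) :
    ∑ k : Fin n, (if k = j then (1:ℝ) else -c) = 1 - ((n:ℝ) - 1) * c := by
  have h : ∀ k : Fin n, (if k = j then (1:ℝ) else -c) = (if k = j then 1 + c else 0) - c := by
    intro k; by_cases h : k = j <;> simp [h]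
  simp only [h, Finset.sum_sub_distrib, Finset.sum_ite_eq', Finset.mem_univ, if_true,
    Finset.sum_const, Finset.card_univ, Fintype.card_fin, nsmul_eq_mul]
  ring

lemma sum_coef_mul {n : ℕ} (c : ℝ) (j j' : Fin n) :
    ∑ k : Fin n, (if k = j then (1:ℝ) else -c) * (if k = j' then 1 else -c)
      = (n:ℝ) * c^2 - 2*c*(1+c) + (if j = j' then (1+c)^2 else 0) := by
  by_cases h : j = j'
  · subst h
    have h2 : ∀ k : Fin n, (if k = j then (1:ℝ) else -c) * (if k = j then 1 else -c)
        = c^2 + (if k = j then 1 - c^2 else 0) := by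
      intro k; by_cases h : k = j <;> simp [h] <;> ring
    simp only [h2, Finset.sum_add_distrib, Finset.sum_const, Finset.card_univ,
      Fintype.card_fin, nsmul_eq_mul, Finset.sum_ite_eq', Finset.mem_univ, if_true]
    ring
  · have h2 : ∀ k : Fin n, (if k = j then (1:ℝ) else -c) * (if k = j' then 1 else -c)
        = c^2 + ((if k = j then -c - c^2 else 0) + (if k = j' then -c - c^2 else 0)) := by
      intro k
      by_cases h1 : k = j
      · have h3 : ¬ k = j' := by rw [h1]; exact h
        subst h1
        simp [h3, Ne.symm h]
      · by_cases h2 : k = j'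
        · subst h2; simp [h1, h]
        · simp [h1, h2]; ring
    simp only [h2, Finset.sum_add_distrib, Finset.sum_const, Finset.card_univ,
      Fintype.card_fin, nsmul_eq_mul, Finset.sum_ite_eq', Finset.mem_univ, if_true, if_neg h]
    ring

/-- **RLOO gradient variance (binary reward).** -/
theorem rloo_variance_binary
    {Ω : Type*} [MeasurableSpace Ω] (μ : Measure Ω) [IsProbabilityMeasure μ]
    (n : ℕ) (hn : 2 ≤ n)
    (R Z : Ω → ℝ) (Rv Zv : Fin n → Ω → ℝ)
    (hR2 : MemLp R 2 μ) (hZ2 : MemLp Z 2 μ)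
    (hident : ∀ i, IdentDistrib (fun ω => (Rv i ω, Zv i ω)) (fun ω => (R ω, Z ω)) μ μ)
    (hindep : iIndepFun (fun i ω => (Rv i ω, Zv i ω)) μ)
    (hcov1 : ∀ j k, covar μ (Rv k) (Zv j) = 0)
    (hcov2 : ∀ j j' k k', covar μ (fun ω => Rv k ω * Rv k' ω)
      (fun ω => Zv j ω * Zv j' ω) = 0)
    (p : ℝ) (hRval : ∀ ω, R ω = 1 ∨ R ω = -1)
    (hp : (μ {ω | R ω = 1}).toReal = p) :
    variance (fun ω =>
        (1 / (n : ℝ)) * ∑ j,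
          (Rv j ω - (1 / ((n : ℝ) - 1)) * ∑ k ∈ Finset.univ.erase j, Rv k ω) * Zv j ω) μ
      = 1 / ((n : ℝ) - 1) * (4 * variance Z μ * p * (1 - p)) := by
  have hn2 : (2:ℝ) ≤ (n:ℝ) := by exact_mod_cast hn
  have hn1 : (n:ℝ) - 1 ≠ 0 := by linarith
  have hnR : (n:ℝ) ≠ 0 := by linarith
  set c : ℝ := 1 / ((n:ℝ) - 1) with hc
  set a : ℝ := ∫ ω, R ω ∂μ with ha
  set m : ℝ := ∫ ω, Z ω ∂μ with hm
  set s2 : ℝ := ∫ ω, Z ω * Z ω ∂μ with hs2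
  -- identically distributed marginals
  have hidR : ∀ i, IdentDistrib (Rv i) R μ μ := fun i => (hident i).comp measurable_fst
  have hidZ : ∀ i, IdentDistrib (Zv i) Z μ μ := fun i => (hident i).comp measurable_snd
  have hRm : ∀ i, AEStronglyMeasurable (Rv i) μ :=
    fun i => (hidR i).aemeasurable_fst.aestronglyMeasurable
  have hZm : ∀ i, AEStronglyMeasurable (Zv i) μ :=
    fun i => (hidZ i).aemeasurable_fst.aestronglyMeasurable
  have hZv2 : ∀ i, MemLp (Zv i) 2 μ := fun i => (hidZ i).symm.memLp_snd hZ2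
  -- a.e. values of Rv i
  have hRae : ∀ i, ∀ᵐ ω ∂μ, Rv i ω = 1 ∨ Rv i ω = -1 := by
    intro i
    have hS : MeasurableSet {x : ℝ × ℝ | x.1 = 1 ∨ x.1 = -1} := by
      have : {x : ℝ × ℝ | x.1 = 1 ∨ x.1 = -1}
          = Prod.fst ⁻¹' {1} ∪ Prod.fst ⁻¹' {-1} := by
        ext x; simp [Set.mem_union, Set.mem_preimage]
      rw [this]
      exact (measurable_fst (measurableSet_singleton 1)).union
        (measurable_fst (measurableSet_singleton (-1)))
    have h1 : μ ((fun ω => (Rv i ω, Zv i ω)) ⁻¹' {x : ℝ × ℝ | x.1 = 1 ∨ x.1 = -1}ᶜ)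
        = μ ((fun ω => (R ω, Z ω)) ⁻¹' {x : ℝ × ℝ | x.1 = 1 ∨ x.1 = -1}ᶜ) := by
      rw [← Measure.map_apply_of_aemeasurable (hident i).aemeasurable_fst hS.compl,
        ← Measure.map_apply_of_aemeasurable (hident i).aemeasurable_snd hS.compl,
        (hident i).map_eq]
    have h2 : ((fun ω => (R ω, Z ω)) ⁻¹' {x : ℝ × ℝ | x.1 = 1 ∨ x.1 = -1}ᶜ) = ∅ := by
      ext ω; simp [hRval ω]
    rw [ae_iff]
    have h3 : {ω | ¬(Rv i ω = 1 ∨ Rv i ω = -1)}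
        = ((fun ω => (Rv i ω, Zv i ω)) ⁻¹' {x : ℝ × ℝ | x.1 = 1 ∨ x.1 = -1}ᶜ) := rfl
    rw [h3, h1, h2, measure_empty]
  have hRbd : ∀ i, ∀ᵐ ω ∂μ, ‖Rv i ω‖ ≤ 1 := by
    intro i
    filter_upwards [hRae i] with ω hω
    rcases hω with h | h <;> rw [h] <;> norm_num
  -- first moments
  have haR : ∀ i, ∫ ω, Rv i ω ∂μ = a := fun i => (hidR i).integral_eq
  have hmZ : ∀ i, ∫ ω, Zv i ω ∂μ = m := fun i => (hidZ i).integral_eq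
  have hsZ : ∀ i, ∫ ω, Zv i ω * Zv i ω ∂μ = s2 := fun i =>
    ((hidZ i).comp (measurable_id.mul measurable_id)).integral_eq
  have hRRone : ∀ i, ∫ ω, Rv i ω * Rv i ω ∂μ = 1 := by
    intro i
    have h : (fun ω => Rv i ω * Rv i ω) =ᵐ[μ] fun _ => (1:ℝ) := by
      filter_upwards [hRae i] with ω hω
      rcases hω with h | h <;> rw [h] <;> norm_num
    rw [integral_congr_ae h]
    simp
  -- second cross moments via independence
  have hIRR : ∀ k k', ∫ ω, Rv k ω * Rv k' ω ∂μ = (if k = k' then 1 else a * a) := by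
    intro k k'
    by_cases h : k = k'
    · subst h; rw [if_pos rfl]; exact hRRone k
    · rw [if_neg h]
      have hind : IndepFun (Rv k) (Rv k') μ :=
        (hindep.indepFun h).comp measurable_fst measurable_fst
      have hmul := hind.integral_mul_eq_mul_integral (hRm k) (hRm k')
      simp only [Pi.mul_apply] at hmul
      rw [hmul, haR, haR]
  have hIZZ : ∀ j j', ∫ ω, Zv j ω * Zv j' ω ∂μ = (if j = j' then s2 else m * m) := by
    intro j j'
    by_cases h : j = j'
    · subst h; rw [if_pos rfl]; exact hsZ j
    · rw [if_neg h]
      have hind : IndepFun (Zv j) (Zv j') μ :=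
        (hindep.indepFun h).comp measurable_snd measurable_snd
      have hmul := hind.integral_mul_eq_mul_integral (hZm j) (hZm j')
      simp only [Pi.mul_apply] at hmul
      rw [hmul, hmZ, hmZ]
  -- integrability
  have hZint : ∀ i, Integrable (Zv i) μ := fun i => (hZv2 i).integrable one_le_two
  have hZZint : ∀ j j', Integrable (fun ω => Zv j ω * Zv j' ω) μ := by
    intro j j'
    have h := ((hZv2 j').smul (hZv2 j) (r := 1))
    rw [memLp_one_iff_integrable] at h
    exact h.congr (Filter.Eventually.of_forall fun ω => by simp [smul_eq_mul])
  have hRZint : ∀ k j, Integrable (fun ω => Rv k ω * Zv j ω) μ := fun k j =>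
    (hZint j).bdd_mul (hRm k) (hRbd k)
  have hFint : ∀ j j' k k',
      Integrable (fun ω => Rv k ω * Rv k' ω * (Zv j ω * Zv j' ω)) μ := by
    intro j j' k k'
    exact ((((hZZint j j').bdd_mul (hRm k') (hRbd k')).bdd_mul (hRm k)
      (hRbd k))).congr (Filter.Eventually.of_forall fun ω => by ring_nf)
  -- values of integrals of the basic terms
  have hRZval : ∀ k j, ∫ ω, Rv k ω * Zv j ω ∂μ = a * m := by
    intro k j
    have h := hcov1 j k
    rw [covar, sub_eq_zero] at h
    rw [h, haR, hmZ]
  have hFval : ∀ j j' k k', ∫ ω, Rv k ω * Rv k' ω * (Zv j ω * Zv j' ω) ∂μ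
      = (if k = k' then 1 else a * a) * (if j = j' then s2 else m * m) := by
    intro j j' k k'
    have h := hcov2 j j' k k'
    rw [covar, sub_eq_zero] at h
    rw [h, hIRR, hIZZ]
  -- rewrite the estimator in coefficient form
  have h1 : ∀ (ω : Ω) (j : Fin n), ∑ k, (if k = j then (1:ℝ) else -c) * Rv k ω
      = Rv j ω - c * ∑ k ∈ Finset.univ.erase j, Rv k ω := by
    intro ω j
    rw [← Finset.sum_erase_add Finset.univ _ (Finset.mem_univ j), if_pos rfl, one_mul]
    rw [show (∑ k ∈ Finset.univ.erase j, (if k = j then (1:ℝ) else -c) * Rv k ω)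
        = ∑ k ∈ Finset.univ.erase j, -c * Rv k ω from
      Finset.sum_congr rfl fun k hk => by rw [if_neg (Finset.mem_erase.1 hk).1]]
    rw [← Finset.mul_sum]
    ring
  have hfun : (fun ω => (1 / (n : ℝ)) * ∑ j,
        (Rv j ω - c * ∑ k ∈ Finset.univ.erase j, Rv k ω) * Zv j ω)
      = fun ω => (1 / (n:ℝ)) * ∑ j, ∑ k,
          (if k = j then (1:ℝ) else -c) * (Rv k ω * Zv j ω) := by
    funext ω
    congr 1
    refine Finset.sum_congr rfl fun j _ => ?_
    rw [← h1 ω j, Finset.sum_mul]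
    exact Finset.sum_congr rfl fun k _ => (mul_assoc _ _ _)
  rw [hfun]
  -- MemLp of the estimator
  have hRZ2 : ∀ k j, MemLp (fun ω => Rv k ω * Zv j ω) 2 μ := by
    intro k j
    refine MemLp.of_le_mul (c := 1) (hZv2 j) ((hRm k).mul (hZm j)) ?_
    filter_upwards [hRbd k] with ω hω
    rw [norm_mul]
    calc ‖Rv k ω‖ * ‖Zv j ω‖ ≤ 1 * ‖Zv j ω‖ :=
          mul_le_mul_of_nonneg_right hω (norm_nonneg _)
      _ = 1 * ‖Zv j ω‖ := rfl
  have hG2 : MemLp (fun ω => (1/(n:ℝ)) * ∑ j, ∑ k,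
      (if k = j then (1:ℝ) else -c) * (Rv k ω * Zv j ω)) 2 μ := by
    apply MemLp.const_mul
    apply memLp_finset_sum
    intro j _
    apply memLp_finset_sum
    intro k _
    exact (hRZ2 k j).const_mul _
  rw [variance_eq_sub hG2]
  have hcoef0 : (1 : ℝ) - ((n:ℝ) - 1) * c = 0 := by
    rw [hc]; field_simp; ring
  -- mean is zero
  have hEG : ∫ ω, ((1/(n:ℝ)) * ∑ j, ∑ k,
      (if k = j then (1:ℝ) else -c) * (Rv k ω * Zv j ω)) ∂μ = 0 := by
    rw [integral_const_mul]
    rw [integral_finset_sum _ fun j _ =>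
      integrable_finset_sum _ fun k _ => (hRZint k j).const_mul _]
    have : ∀ j : Fin n, ∫ ω, (∑ k, (if k = j then (1:ℝ) else -c) * (Rv k ω * Zv j ω)) ∂μ = 0 := by
      intro j
      rw [integral_finset_sum _ fun k _ => (hRZint k j).const_mul _]
      have h2 : ∀ k : Fin n, ∫ ω, (if k = j then (1:ℝ) else -c) * (Rv k ω * Zv j ω) ∂μ
          = (if k = j then (1:ℝ) else -c) * (a * m) := by
        intro k; rw [integral_const_mul, hRZval]
      rw [Finset.sum_congr rfl fun k _ => h2 k, ← Finset.sum_mul, sum_coef, hcoef0, zero_mul]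
    rw [Finset.sum_congr rfl fun j _ => this j]
    simp
  -- pointwise expansion of the square
  have hsq : ∀ ω : Ω, ((1/(n:ℝ)) * ∑ j, ∑ k, (if k = j then (1:ℝ) else -c) * (Rv k ω * Zv j ω))^2
      = (1/(n:ℝ))^2 * ∑ j : Fin n, ∑ j' : Fin n, ∑ k : Fin n, ∑ k' : Fin n,
          ((if k = j then (1:ℝ) else -c) * (if k' = j' then (1:ℝ) else -c))
            * (Rv k ω * Rv k' ω * (Zv j ω * Zv j' ω)) := by
    intro ω
    rw [mul_pow]
    congr 1
    rw [pow_two, Finset.sum_mul_sum]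
    refine Finset.sum_congr rfl fun j _ => ?_
    refine Finset.sum_congr rfl fun j' _ => ?_
    rw [Finset.sum_mul_sum]
    exact Finset.sum_congr rfl fun k _ => Finset.sum_congr rfl fun k' _ => by ring
  -- the second moment
  have hEG2 : ∫ ω, ((1/(n:ℝ)) * ∑ j, ∑ k, (if k = j then (1:ℝ) else -c) * (Rv k ω * Zv j ω))^2 ∂μ
      = (1/(n:ℝ))^2 * ∑ j : Fin n, ∑ j' : Fin n, ∑ k : Fin n, ∑ k' : Fin n,
          ((if k = j then (1:ℝ) else -c) * (if k' = j' then (1:ℝ) else -c))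
            * ((if k = k' then (1:ℝ) else a*a) * (if j = j' then s2 else m*m)) := by
    rw [integral_congr_ae (Filter.Eventually.of_forall hsq), integral_const_mul]
    congr 1
    rw [integral_finset_sum _ fun j _ => integrable_finset_sum _ fun j' _ =>
      integrable_finset_sum _ fun k _ => integrable_finset_sum _ fun k' _ =>
        (hFint j j' k k').const_mul _]
    refine Finset.sum_congr rfl fun j _ => ?_
    rw [integral_finset_sum _ fun j' _ => integrable_finset_sum _ fun k _ =>
      integrable_finset_sum _ fun k' _ => (hFint j j' k k').const_mul _]
    refine Finset.sum_congr rfl fun j' _ => ?_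
    rw [integral_finset_sum _ fun k _ => integrable_finset_sum _ fun k' _ =>
      (hFint j j' k k').const_mul _]
    refine Finset.sum_congr rfl fun k _ => ?_
    rw [integral_finset_sum _ fun k' _ => (hFint j j' k k').const_mul _]
    refine Finset.sum_congr rfl fun k' _ => ?_
    rw [integral_const_mul, hFval j j' k k']
  -- evaluation of the inner double sum
  have hinner : ∀ j j' : Fin n,
      (∑ k : Fin n, ∑ k' : Fin n,
        ((if k = j then (1:ℝ) else -c) * (if k' = j' then (1:ℝ) else -c))
          * ((if k = k' then (1:ℝ) else a*a) * (if j = j' then s2 else m*m)))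
      = ((n:ℝ)*c^2 - 2*c*(1+c) + (if j = j' then (1+c)^2 else 0)) * (1 - a*a)
          * (if j = j' then s2 else m*m) := by
    intro j j'
    have e1 : ∀ k k' : Fin n,
        ((if k = j then (1:ℝ) else -c) * (if k' = j' then (1:ℝ) else -c))
          * ((if k = k' then (1:ℝ) else a*a) * (if j = j' then s2 else m*m))
        = ((if k = j then (1:ℝ) else -c) * ((if k' = j' then (1:ℝ) else -c) * (a*a))
          + (if k = k' then
              ((if k = j then (1:ℝ) else -c) * (if k' = j' then (1:ℝ) else -c)) * (1 - a*a)
            else 0)) * (if j = j' then s2 else m*m) := by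
      intro k k'
      by_cases h : k = k'
      · subst h; simp only [eq_self_iff_true, if_true]; ring
      · simp only [if_neg h, add_zero]; ring
    rw [Finset.sum_congr rfl fun k _ => Finset.sum_congr rfl fun k' _ => e1 k k']
    simp only [← Finset.sum_mul]
    congr 1
    simp only [Finset.sum_add_distrib]
    have e2 : ∀ k : Fin n,
        ∑ k' : Fin n, (if k = j then (1:ℝ) else -c) * ((if k' = j' then (1:ℝ) else -c) * (a*a))
        = (if k = j then (1:ℝ) else -c) * ((1 - ((n:ℝ)-1)*c) * (a*a)) := by
      intro k
      rw [← Finset.mul_sum, ← Finset.sum_mul, sum_coef]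
    rw [Finset.sum_congr rfl fun k _ => e2 k, ← Finset.sum_mul, hcoef0]
    have e4 : ∀ k : Fin n,
        ∑ k' : Fin n, (if k = k' then
            ((if k = j then (1:ℝ) else -c) * (if k' = j' then (1:ℝ) else -c)) * (1 - a*a)
          else 0)
        = ((if k = j then (1:ℝ) else -c) * (if k = j' then (1:ℝ) else -c)) * (1 - a*a) := by
      intro k
      rw [Finset.sum_ite_eq]
      simp
    rw [Finset.sum_congr rfl fun k _ => e4 k, ← Finset.sum_mul, sum_coef_mul]
    ring
  have e3 : ∀ j j' : Fin n,
      ((n:ℝ)*c^2 - 2*c*(1+c) + (if j = j' then (1+c)^2 else 0)) * (1 - a*a)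
          * (if j = j' then s2 else m*m)
      = ((n:ℝ)*c^2 - 2*c*(1+c)) * (1 - a*a) * (m*m)
        + (if j = j' then
            ((n:ℝ)*c^2 - 2*c*(1+c) + (1+c)^2) * (1 - a*a) * s2
              - ((n:ℝ)*c^2 - 2*c*(1+c)) * (1 - a*a) * (m*m)
          else 0) := by
    intro j j'
    by_cases h : j = j'
    · simp only [if_pos h]; ring
    · simp only [if_neg h]; ring
  have hT : (∑ j : Fin n, ∑ j' : Fin n, ∑ k : Fin n, ∑ k' : Fin n,
        ((if k = j then (1:ℝ) else -c) * (if k' = j' then (1:ℝ) else -c))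
          * ((if k = k' then (1:ℝ) else a*a) * (if j = j' then s2 else m*m)))
      = (n:ℝ) * ((n:ℝ) * (((n:ℝ)*c^2 - 2*c*(1+c)) * (1 - a*a) * (m*m))
          + (((n:ℝ)*c^2 - 2*c*(1+c) + (1+c)^2) * (1 - a*a) * s2
            - ((n:ℝ)*c^2 - 2*c*(1+c)) * (1 - a*a) * (m*m))) := by
    rw [Finset.sum_congr rfl fun j _ => Finset.sum_congr rfl fun j' _ =>
      (hinner j j').trans (e3 j j')]
    simp only [Finset.sum_add_distrib, Finset.sum_const, Finset.card_univ, Fintype.card_fin,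
      nsmul_eq_mul, Finset.sum_ite_eq, Finset.mem_univ, if_true]
    ring
  -- value of E[R]
  have hEa : a = 2 * p - 1 := by
    obtain ⟨R', hR'sm, hR'ae⟩ := hR2.aestronglyMeasurable
    have hR'meas : Measurable R' := hR'sm.measurable
    have hs : MeasurableSet {ω | R' ω = 1} := hR'meas (measurableSet_singleton 1)
    have hsetae : ({ω | R ω = 1} : Set Ω) =ᵐ[μ] ({ω | R' ω = 1} : Set Ω) := by
      apply Filter.eventuallyEq_set.2
      filter_upwards [hR'ae] with ω hω
      simp only [Set.mem_setOf_eq, hω]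
    have hmu1 : (μ {ω | R' ω = 1}).toReal = p := by
      rw [← measure_congr hsetae, hp]
    have hind : R =ᵐ[μ] fun ω => 2 * Set.indicator {ω | R' ω = 1} (1 : Ω → ℝ) ω - 1 := by
      filter_upwards [hR'ae] with ω hω
      rcases hRval ω with h | h
      · have hmem : ω ∈ {ω | R' ω = 1} := by
          simp only [Set.mem_setOf_eq, ← hω]; exact h
        rw [h, Set.indicator_of_mem hmem]; norm_num
      · have hmem : ω ∉ {ω | R' ω = 1} := by
          simp only [Set.mem_setOf_eq, ← hω, h]; norm_num
        rw [h, Set.indicator_of_notMem hmem]; norm_num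
    have hsub := integral_sub (μ := μ)
      (f := fun a => 2 * Set.indicator {ω | R' ω = 1} (1 : Ω → ℝ) a)
      (g := fun _ => (1:ℝ))
      (((integrable_const (1:ℝ)).indicator hs).const_mul 2) (integrable_const 1)
    rw [ha, integral_congr_ae hind, hsub, integral_const_mul, integral_indicator_one hs,
      integral_const]
    simp [hmu1, measureReal_def]
  -- variance of Z
  have hVarZ : variance Z μ = s2 - m * m := by
    rw [variance_eq_sub hZ2]
    simp only [Pi.pow_apply, pow_two]
    rfl
  -- put everything together
  simp only [Pi.pow_apply]
  rw [hEG, hEG2, hT, hVarZ, hEa, hc]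
  field_simp
  ring
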